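/- Let Q̂(t,x) = (H(t,·)*G)(x) as above and define R̂(z) = Q̂(z) + (1/(2π)) log ‖z‖_s for z = (t,x) ≠ 0, where ‖z‖_s = (|t|² + |x|⁴)^{1/4} is the parabolic norm. Then R̂ is homogeneous of parabolic degree 0, i.e. R̂(λ²t, λx) = R̂(t,x) for all λ > 0 and all (t,x) with t ≠ 0. In particular R̂ is bounded on the set {z : ‖z‖_s = 1, t ≠ 0} if and only if it is bounded on {z : t ≠ 0}. -/

import Mathlib

open MeasureTheory

/-- The heat kernel on `ℝ²`, extended symmetrically in time. -/
noncomputable def heatK (t : ℝ) (x : EuclideanSpace ℝ (Fin 2)) : ℝ :=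
  (4 * Real.pi * |t|)⁻¹ * Real.exp (-‖x‖ ^ 2 / (4 * |t|))

/-- The two-dimensional Green's function of the Laplacian. -/
noncomputable def greenG (x : EuclideanSpace ℝ (Fin 2)) : ℝ :=
  -(1 / (2 * Real.pi)) * Real.log ‖x‖

/-- `Q̂(t,x) = (H(t,·) * G)(x)`, spatial convolution. -/
noncomputable def Qhat (t : ℝ) (x : EuclideanSpace ℝ (Fin 2)) : ℝ :=
  ∫ y, heatK t (x - y) * greenG y

/-- The parabolic norm `‖(t,x)‖_s = (|t|² + ‖x‖⁴)^{1/4}`. -/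
noncomputable def pnormTX (t : ℝ) (x : EuclideanSpace ℝ (Fin 2)) : ℝ :=
  (t ^ 2 + ‖x‖ ^ 4) ^ ((1 : ℝ) / 4)

/-- `R̂(z) = Q̂(z) + (1/(2π)) log ‖z‖_s`. -/
noncomputable def Rhat (t : ℝ) (x : EuclideanSpace ℝ (Fin 2)) : ℝ :=
  Qhat t x + (1 / (2 * Real.pi)) * Real.log (pnormTX t x)

section AuxLemmas
open Real

local notation "E2" => EuclideanSpace ℝ (Fin 2)

lemma gauss_integrable {b : ℝ} (hb : 0 < b) :
    Integrable (fun v : E2 => Real.exp (-b * ‖v‖ ^ 2)) := by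
  have h := (GaussianFourier.integrable_cexp_neg_mul_sq_norm_add
    (b := (b : ℂ)) (by simpa using hb) 0 (0 : E2)).norm
  refine h.congr (Filter.Eventually.of_forall fun v => ?_)
  show ‖Complex.exp _‖ = _
  rw [Complex.norm_exp]
  simp [← Complex.ofReal_pow]

lemma gauss_integral {b : ℝ} (hb : 0 < b) :
    ∫ v : E2, Real.exp (-b * ‖v‖ ^ 2) = Real.pi / b := by
  rw [GaussianFourier.integral_rexp_neg_mul_sq_norm hb, finrank_euclideanSpace_fin]
  simp [← Complex.ofReal_pow]




lemma heatK_eq (t : ℝ) (v : E2) :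
    heatK t v = (4 * Real.pi * |t|)⁻¹ * Real.exp (-(4 * |t|)⁻¹ * ‖v‖ ^ 2) := by
  rw [heatK, neg_div, div_eq_mul_inv, mul_comm (‖v‖ ^ 2), neg_mul]

lemma integrable_heatK_sub (t : ℝ) (ht : t ≠ 0) (x : E2) :
    Integrable (fun y : E2 => heatK t (x - y)) := by
  have hb : (0:ℝ) < (4 * |t|)⁻¹ := by positivity
  have h := ((gauss_integrable hb).comp_sub_left x).const_mul (4 * Real.pi * |t|)⁻¹
  exact h.congr (Filter.Eventually.of_forall fun y => (heatK_eq t (x - y)).symm)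

lemma integral_heatK (t : ℝ) (ht : t ≠ 0) (x : E2) :
    ∫ y : E2, heatK t (x - y) = 1 := by
  rw [integral_sub_left_eq_self (heatK t) volume x]
  have hb : (0:ℝ) < (4 * |t|)⁻¹ := by positivity
  simp_rw [heatK_eq t]
  rw [integral_const_mul, gauss_integral hb]
  have h1 : |t| ≠ 0 := abs_ne_zero.2 ht
  have hpi := Real.pi_ne_zero
  field_simp

lemma integrableOn_neg_log_closedBall :
    IntegrableOn (fun y : E2 => -Real.log ‖y‖) (Metric.closedBall (0:E2) 1) := by
  set μ := volume.restrict (Metric.closedBall (0:E2) 1) with hμ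
  have hmeas : Measurable fun y : E2 => -Real.log ‖y‖ :=
    (Real.measurable_log.comp measurable_norm).neg
  have hnn : 0 ≤ᵐ[μ] fun y : E2 => -Real.log ‖y‖ := by
    have : ∀ᵐ y ∂μ, 0 ≤ -Real.log ‖y‖ := by
      rw [hμ, MeasureTheory.ae_restrict_iff' measurableSet_closedBall]
      refine Filter.Eventually.of_forall fun y hy => ?_
      have h1 : ‖y‖ ≤ 1 := by simpa [Metric.mem_closedBall] using hy
      simp only [neg_nonneg]
      exact Real.log_nonpos (norm_nonneg _) h1
    exact this
  refine ⟨hmeas.aestronglyMeasurable, ?_⟩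
  rw [MeasureTheory.hasFiniteIntegral_iff_norm]
  have heq : ∫⁻ a, ENNReal.ofReal ‖-Real.log ‖a‖‖ ∂μ
      = ∫⁻ a, ENNReal.ofReal (-Real.log ‖a‖) ∂μ := by
    refine lintegral_congr_ae ?_
    filter_upwards [hnn] with a ha
    rw [Real.norm_eq_abs, abs_of_nonneg ha]
  rw [heq, lintegral_eq_lintegral_meas_le μ hnn hmeas.aemeasurable]
  have hbd : ∀ t ∈ Set.Ioi (0:ℝ), μ {a : E2 | t ≤ -Real.log ‖a‖}
      ≤ ENNReal.ofReal (Real.exp (-2 * t)) * volume (Metric.ball (0:E2) 1) := by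
    intro t ht
    have hsub : {a : E2 | t ≤ -Real.log ‖a‖} ∩ Metric.closedBall 0 1
        ⊆ Metric.closedBall (0:E2) (Real.exp (-t)) := by
      rintro a ⟨ha, -⟩
      rcases eq_or_ne a 0 with rfl | ha0
      · simp [Metric.mem_closedBall, (Real.exp_pos _).le]
      · have hlog : Real.log ‖a‖ ≤ -t := by linarith [Set.mem_setOf_eq ▸ ha]
        have h1 : ‖a‖ = Real.exp (Real.log ‖a‖) :=
          (Real.exp_log (norm_pos_iff.2 ha0)).symm
        rw [Metric.mem_closedBall, dist_zero_right, h1]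
        exact Real.exp_le_exp.2 hlog
    calc μ {a : E2 | t ≤ -Real.log ‖a‖}
        ≤ volume (Metric.closedBall (0:E2) (Real.exp (-t))) := by
          rw [hμ, Measure.restrict_apply₀' measurableSet_closedBall.nullMeasurableSet]
          exact measure_mono hsub
      _ = ENNReal.ofReal (Real.exp (-t) ^ Module.finrank ℝ (EuclideanSpace ℝ (Fin 2))) * volume (Metric.ball (0:E2) 1) :=
          Measure.addHaar_closedBall _ _ (Real.exp_pos _).le
      _ = ENNReal.ofReal (Real.exp (-2 * t)) * volume (Metric.ball (0:E2) 1) := by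
          rw [finrank_euclideanSpace_fin, ← Real.exp_nat_mul]
          norm_num
  calc ∫⁻ t in Set.Ioi 0, μ {a : E2 | t ≤ -Real.log ‖a‖}
      ≤ ∫⁻ t in Set.Ioi (0:ℝ),
          ENNReal.ofReal (Real.exp (-2 * t)) * volume (Metric.ball (0:E2) 1) :=
        setLIntegral_mono' measurableSet_Ioi hbd
    _ = (∫⁻ t in Set.Ioi (0:ℝ), ENNReal.ofReal (Real.exp (-2 * t)))
          * volume (Metric.ball (0:E2) 1) := by
        rw [lintegral_mul_const' _ _ measure_ball_lt_top.ne]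
    _ < ⊤ := by
        refine ENNReal.mul_lt_top ?_ measure_ball_lt_top
        have : IntegrableOn (fun t : ℝ => Real.exp (-2 * t)) (Set.Ioi 0) := by
          simpa [neg_mul, mul_comm] using exp_neg_integrableOn_Ioi 0 (show (0:ℝ) < 2 by norm_num)
        exact this.setLIntegral_lt_top

lemma heatK_nonneg (t : ℝ) (v : E2) : 0 ≤ heatK t v := by
  unfold heatK; positivity

lemma heatK_le (t : ℝ) (v : E2) : heatK t v ≤ (4 * Real.pi * |t|)⁻¹ := by
  unfold heatK
  have h1 : Real.exp (-‖v‖ ^ 2 / (4 * |t|)) ≤ 1 := by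
    rw [Real.exp_le_one_iff, neg_div]
    have : (0:ℝ) ≤ ‖v‖ ^ 2 / (4 * |t|) := by positivity
    linarith
  have h2 : (0:ℝ) ≤ (4 * Real.pi * |t|)⁻¹ := by positivity
  calc (4 * Real.pi * |t|)⁻¹ * Real.exp (-‖v‖ ^ 2 / (4 * |t|))
      ≤ (4 * Real.pi * |t|)⁻¹ * 1 := by gcongr
    _ = (4 * Real.pi * |t|)⁻¹ := mul_one _

lemma ae_ne_zero : ∀ᵐ y : E2, y ≠ 0 := by
  rw [MeasureTheory.ae_iff]
  simp only [ne_eq, not_not]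
  have : {a : E2 | a = 0} = {0} := by ext a; simp
  rw [this]
  exact measure_singleton 0


lemma gauss_poly_bound {a X d L : ℝ} (ha : 0 < a) (hX : 0 ≤ X) (hd : 0 ≤ d)
    (hL : L ≤ X + d) :
    Real.exp (-d ^ 2 / a) * L ≤ (X + 1 + 2 * a) * Real.exp (-(2 * a)⁻¹ * d ^ 2) := by
  set e1 : ℝ := Real.exp (-d ^ 2 / a) with he1
  set e2 : ℝ := Real.exp (-(2 * a)⁻¹ * d ^ 2) with he2
  have he1pos : 0 < e1 := Real.exp_pos _
  have he2pos : 0 < e2 := Real.exp_pos _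
  have he2le1 : e2 ≤ 1 := by
    rw [he2, Real.exp_le_one_iff, neg_mul]
    have : (0:ℝ) ≤ (2 * a)⁻¹ * d ^ 2 := by positivity
    linarith
  have he1e2 : e1 = e2 * e2 := by
    rw [he1, he2, ← Real.exp_add]
    congr 1
    field_simp
    ring
  have hde2 : d ^ 2 * e2 ≤ 2 * a := by
    have hE : Real.exp ((2 * a)⁻¹ * d ^ 2) * e2 = 1 := by
      rw [he2, ← Real.exp_add]
      simp
    have hue : (2 * a)⁻¹ * d ^ 2 + 1 ≤ Real.exp ((2 * a)⁻¹ * d ^ 2) :=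
      Real.add_one_le_exp _
    have h3 : ((2 * a)⁻¹ * d ^ 2) * e2 + e2 ≤ 1 := by
      nlinarith [mul_le_mul_of_nonneg_right hue he2pos.le]
    have h4 : ((2 * a)⁻¹ * d ^ 2) * e2 ≤ 1 := by linarith
    have h5 : (2 * a) * (((2 * a)⁻¹ * d ^ 2) * e2) ≤ (2 * a) * 1 :=
      mul_le_mul_of_nonneg_left h4 (by positivity)
    have h6 : (2 * a) * (((2 * a)⁻¹ * d ^ 2) * e2) = d ^ 2 * e2 := by
      field_simp
    linarith
  have hd1 : d ≤ 1 + d ^ 2 := by nlinarith [sq_nonneg (d - 1)]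
  have hA : e1 * L ≤ e1 * (X + d) := mul_le_mul_of_nonneg_left hL he1pos.le
  have hB : e2 * d ≤ 1 + 2 * a := by
    nlinarith [mul_le_mul_of_nonneg_left hd1 he2pos.le]
  have hC : e2 * X ≤ X := by nlinarith
  have hD : e2 * (X + d) ≤ X + 1 + 2 * a := by nlinarith
  calc e1 * L ≤ e1 * (X + d) := hA
    _ = e2 * (e2 * (X + d)) := by rw [he1e2]; ring
    _ ≤ e2 * (X + 1 + 2 * a) := mul_le_mul_of_nonneg_left hD he2pos.le
    _ = (X + 1 + 2 * a) * e2 := by ring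

lemma integrable_heatK_mul_greenG (t : ℝ) (ht : t ≠ 0) (x : E2) :
    Integrable (fun y : E2 => heatK t (x - y) * greenG y) := by
  set a : ℝ := 4 * |t| with ha_def
  have ha : 0 < a := by positivity
  set K : ℝ := (4 * Real.pi * |t|)⁻¹ with hK_def
  have hK : 0 ≤ K := by positivity
  set c : ℝ := 1 / (2 * Real.pi) with hc_def
  have hc : 0 ≤ c := by positivity
  set g : E2 → ℝ := fun y =>
    c * K * Set.indicator (Metric.closedBall (0:E2) 1) (fun y => -Real.log ‖y‖) y
      + c * K * (‖x‖ + 1 + 2 * a) * Real.exp (-(2 * a)⁻¹ * ‖x - y‖ ^ 2) with hg_def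
  have hgint : Integrable g := by
    have h1 : Integrable (fun y : E2 =>
        Set.indicator (Metric.closedBall (0:E2) 1) (fun y => -Real.log ‖y‖) y) :=
      (integrableOn_neg_log_closedBall.integrable_indicator measurableSet_closedBall)
    have h2b : (0:ℝ) < (2 * a)⁻¹ := by positivity
    have h2 : Integrable (fun y : E2 => Real.exp (-(2 * a)⁻¹ * ‖x - y‖ ^ 2)) :=
      (gauss_integrable h2b).comp_sub_left x
    exact (h1.const_mul _).add (h2.const_mul _)
  have hmeas : AEStronglyMeasurable (fun y : E2 => heatK t (x - y) * greenG y) volume := by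
    have m1 : Measurable fun y : E2 => heatK t (x - y) := by
      unfold heatK; fun_prop
    have m2 : Measurable fun y : E2 => greenG y := by
      unfold greenG
      exact measurable_const.mul (Real.measurable_log.comp measurable_norm)
    exact (m1.mul m2).aestronglyMeasurable
  refine hgint.mono' hmeas ?_
  filter_upwards [ae_ne_zero] with y hy
  have hny : 0 < ‖y‖ := norm_pos_iff.2 hy
  have hKb : heatK t (x - y) ≤ K := heatK_le t _
  have hKn : 0 ≤ heatK t (x - y) := heatK_nonneg t _
  have habs : ‖heatK t (x - y) * greenG y‖ = heatK t (x - y) * (c * |Real.log ‖y‖|) := by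
    rw [norm_mul, Real.norm_eq_abs, Real.norm_eq_abs, abs_of_nonneg hKn]
    unfold greenG
    rw [abs_mul, abs_neg, abs_of_nonneg hc]
  rw [habs]
  by_cases hyb : ‖y‖ ≤ 1
  · have hmem : y ∈ Metric.closedBall (0:E2) 1 := by
      simpa [Metric.mem_closedBall, dist_zero_right] using hyb
    have hind : Set.indicator (Metric.closedBall (0:E2) 1) (fun y => -Real.log ‖y‖) y
        = -Real.log ‖y‖ := Set.indicator_of_mem hmem _
    have hlog : |Real.log ‖y‖| = -Real.log ‖y‖ :=
      abs_of_nonpos (Real.log_nonpos (norm_nonneg _) hyb)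
    have hlognn : 0 ≤ -Real.log ‖y‖ := by
      simpa using Real.log_nonpos (norm_nonneg _) hyb
    have hterm2 : 0 ≤ c * K * (‖x‖ + 1 + 2 * a) * Real.exp (-(2 * a)⁻¹ * ‖x - y‖ ^ 2) := by
      positivity
    have hgy : g y = c * K * -Real.log ‖y‖
        + c * K * (‖x‖ + 1 + 2 * a) * Real.exp (-(2 * a)⁻¹ * ‖x - y‖ ^ 2) := by
      simp only [hg_def, hind]
    have hmain : heatK t (x - y) * (c * |Real.log ‖y‖|) ≤ c * K * -Real.log ‖y‖ := by
      rw [hlog]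
      calc heatK t (x - y) * (c * -Real.log ‖y‖) ≤ K * (c * -Real.log ‖y‖) :=
            mul_le_mul_of_nonneg_right hKb (by positivity)
        _ = c * K * -Real.log ‖y‖ := by ring
    rw [hgy]
    linarith
  · push_neg at hyb
    have hnotmem : y ∉ Metric.closedBall (0:E2) 1 := by
      simp only [Metric.mem_closedBall, dist_zero_right, not_le]
      exact hyb
    have hind : Set.indicator (Metric.closedBall (0:E2) 1) (fun y => -Real.log ‖y‖) y
        = 0 := Set.indicator_of_notMem hnotmem _
    have hlog : |Real.log ‖y‖| = Real.log ‖y‖ :=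
      abs_of_nonneg (Real.log_nonneg hyb.le)
    have hlogy : Real.log ‖y‖ ≤ ‖x‖ + ‖x - y‖ := by
      have h1 : Real.log ‖y‖ ≤ ‖y‖ - 1 := Real.log_le_sub_one_of_pos hny
      have h2 : ‖y‖ ≤ ‖x‖ + ‖x - y‖ := by
        have he : y = x - (x - y) := by abel
        calc ‖y‖ = ‖x - (x - y)‖ := by rw [← he]
          _ ≤ ‖x‖ + ‖x - y‖ := norm_sub_le _ _
      linarith
    have key : Real.exp (-‖x - y‖ ^ 2 / a) * Real.log ‖y‖
        ≤ (‖x‖ + 1 + 2 * a) * Real.exp (-(2 * a)⁻¹ * ‖x - y‖ ^ 2) :=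
      gauss_poly_bound ha (norm_nonneg x) (norm_nonneg _) hlogy
    have hheat : heatK t (x - y) = K * Real.exp (-‖x - y‖ ^ 2 / a) := by
      rw [heatK]
    have hgy : g y = c * K * 0
        + c * K * (‖x‖ + 1 + 2 * a) * Real.exp (-(2 * a)⁻¹ * ‖x - y‖ ^ 2) := by
      simp only [hg_def, hind]
    rw [hlog, hgy, hheat]
    calc K * Real.exp (-‖x - y‖ ^ 2 / a) * (c * Real.log ‖y‖)
        = c * K * (Real.exp (-‖x - y‖ ^ 2 / a) * Real.log ‖y‖) := by ring
      _ ≤ c * K * ((‖x‖ + 1 + 2 * a) * Real.exp (-(2 * a)⁻¹ * ‖x - y‖ ^ 2)) :=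
          mul_le_mul_of_nonneg_left key (by positivity)
      _ = c * K * 0
          + c * K * (‖x‖ + 1 + 2 * a) * Real.exp (-(2 * a)⁻¹ * ‖x - y‖ ^ 2) := by ring



lemma heatK_scale {lam : ℝ} (hl : 0 < lam) {t : ℝ} (ht : t ≠ 0) (v : E2) :
    heatK (lam ^ 2 * t) (lam • v) = (lam ^ 2)⁻¹ * heatK t v := by
  have h1 : |lam ^ 2 * t| = lam ^ 2 * |t| := by
    rw [abs_mul, abs_of_nonneg (sq_nonneg lam)]
  have h2 : ‖lam • v‖ = lam * ‖v‖ := by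
    rw [norm_smul, Real.norm_eq_abs, abs_of_pos hl]
  have htabs : |t| ≠ 0 := abs_ne_zero.2 ht
  have hlam : lam ≠ 0 := hl.ne'
  rw [heatK, heatK, h1, h2]
  have e1 : -(lam * ‖v‖) ^ 2 / (4 * (lam ^ 2 * |t|)) = -‖v‖ ^ 2 / (4 * |t|) := by
    field_simp
  rw [e1, show 4 * Real.pi * (lam ^ 2 * |t|) = lam ^ 2 * (4 * Real.pi * |t|) by ring,
    mul_inv, mul_assoc]

lemma greenG_scale {lam : ℝ} (hl : 0 < lam) {y : E2} (hy : y ≠ 0) :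
    greenG (lam • y) = greenG y - 1 / (2 * Real.pi) * Real.log lam := by
  rw [greenG, greenG, norm_smul, Real.norm_eq_abs, abs_of_pos hl,
    Real.log_mul hl.ne' (norm_ne_zero_iff.2 hy)]
  ring

lemma Qhat_scale {lam : ℝ} (hl : 0 < lam) {t : ℝ} (ht : t ≠ 0) (x : E2) :
    Qhat (lam ^ 2 * t) (lam • x) = Qhat t x - 1 / (2 * Real.pi) * Real.log lam := by
  have h := MeasureTheory.Measure.integral_comp_smul (volume : Measure E2)
    (fun z : E2 => heatK (lam ^ 2 * t) (lam • x - z) * greenG z) lam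
  simp only [finrank_euclideanSpace_fin] at h
  rw [abs_of_nonneg (inv_nonneg.2 (pow_nonneg hl.le 2)), smul_eq_mul] at h
  have hint : ∫ y : E2, heatK (lam ^ 2 * t) (lam • x - lam • y) * greenG (lam • y)
      = (lam ^ 2)⁻¹ * (Qhat t x - 1 / (2 * Real.pi) * Real.log lam) := by
    have hcong : (fun y : E2 => heatK (lam ^ 2 * t) (lam • x - lam • y) * greenG (lam • y))
        =ᵐ[volume] fun y : E2 =>
          (lam ^ 2)⁻¹ * (heatK t (x - y) * (greenG y - 1 / (2 * Real.pi) * Real.log lam)) := by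
      filter_upwards [ae_ne_zero] with y hy
      rw [show lam • x - lam • y = lam • (x - y) by rw [smul_sub],
        heatK_scale hl ht (x - y), greenG_scale hl hy]
      ring
    rw [integral_congr_ae hcong, integral_const_mul]
    congr 1
    have hsplit : ∫ y : E2, heatK t (x - y) * (greenG y - 1 / (2 * Real.pi) * Real.log lam)
        = (∫ y : E2, heatK t (x - y) * greenG y)
          - (∫ y : E2, heatK t (x - y)) * (1 / (2 * Real.pi) * Real.log lam) := by
      simp_rw [mul_sub]
      rw [integral_sub (integrable_heatK_mul_greenG t ht x)
        ((integrable_heatK_sub t ht x).mul_const _), integral_mul_const]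
    rw [hsplit, integral_heatK t ht x, Qhat]
    ring
  have hmul : (lam ^ 2)⁻¹ * Qhat (lam ^ 2 * t) (lam • x)
      = (lam ^ 2)⁻¹ * (Qhat t x - 1 / (2 * Real.pi) * Real.log lam) := by
    rw [Qhat, ← h, hint]
  exact mul_left_cancel₀ (inv_ne_zero (pow_ne_zero 2 hl.ne')) hmul

lemma pnormTX_pos {t : ℝ} (ht : t ≠ 0) (x : E2) : 0 < pnormTX t x := by
  rw [pnormTX]
  have : (0:ℝ) < t ^ 2 + ‖x‖ ^ 4 := by positivity
  exact Real.rpow_pos_of_pos this _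

lemma pnormTX_scale {lam : ℝ} (hl : 0 < lam) (t : ℝ) (x : E2) :
    pnormTX (lam ^ 2 * t) (lam • x) = lam * pnormTX t x := by
  rw [pnormTX, pnormTX, norm_smul, Real.norm_eq_abs, abs_of_pos hl]
  have h1 : (lam ^ 2 * t) ^ 2 + (lam * ‖x‖) ^ 4 = lam ^ 4 * (t ^ 2 + ‖x‖ ^ 4) := by ring
  rw [h1, Real.mul_rpow (by positivity) (by positivity)]
  congr 1
  rw [← Real.rpow_natCast lam 4, ← Real.rpow_mul hl.le]
  norm_num

lemma Rhat_scale {lam : ℝ} (hl : 0 < lam) {t : ℝ} (ht : t ≠ 0) (x : E2) :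
    Rhat (lam ^ 2 * t) (lam • x) = Rhat t x := by
  rw [Rhat, Rhat, Qhat_scale hl ht x, pnormTX_scale hl t x,
    Real.log_mul hl.ne' (pnormTX_pos ht x).ne']
  ring


end AuxLemmas

/-- `R̂` is homogeneous of parabolic degree `0`, i.e. `R̂(λ²t, λx) = R̂(t,x)`;
in particular it is bounded on the parabolic unit sphere (with `t ≠ 0`) if and only
if it is bounded on `{t ≠ 0}`. -/
theorem Rhat_parabolic_homogeneous_degree_zero :
    (∀ lam : ℝ, 0 < lam → ∀ t : ℝ, t ≠ 0 → ∀ x : EuclideanSpace ℝ (Fin 2),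
        Rhat (lam ^ 2 * t) (lam • x) = Rhat t x) ∧
    ((∃ M : ℝ, ∀ (t : ℝ) (x : EuclideanSpace ℝ (Fin 2)),
        t ≠ 0 → pnormTX t x = 1 → |Rhat t x| ≤ M) ↔
      (∃ M : ℝ, ∀ (t : ℝ) (x : EuclideanSpace ℝ (Fin 2)),
        t ≠ 0 → |Rhat t x| ≤ M)) := by
  constructor
  · exact fun lam hl t ht x => Rhat_scale hl ht x
  constructor
  · rintro ⟨M, hM⟩
    refine ⟨M, fun t x ht => ?_⟩
    set r : ℝ := pnormTX t x with hr_def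
    have hr : 0 < r := pnormTX_pos ht x
    have ht' : t / r ^ 2 ≠ 0 := div_ne_zero ht (by positivity)
    have hsc := Rhat_scale (lam := r) hr ht' (r⁻¹ • x)
    have h1 : r ^ 2 * (t / r ^ 2) = t := by field_simp
    have h2 : r • r⁻¹ • x = x := smul_inv_smul₀ hr.ne' x
    rw [h1, h2] at hsc
    have hp := pnormTX_scale (lam := r) hr (t / r ^ 2) (r⁻¹ • x)
    rw [h1, h2] at hp
    have hp1 : pnormTX (t / r ^ 2) (r⁻¹ • x) = 1 := by
      have h3 : r * 1 = r * pnormTX (t / r ^ 2) (r⁻¹ • x) := by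
        rw [mul_one]; exact hr_def.trans hp
      exact (mul_left_cancel₀ hr.ne' h3).symm
    rw [hsc]
    exact hM _ _ ht' hp1
  · rintro ⟨M, hM⟩
    exact ⟨M, fun t x ht _ => hM t x ht⟩
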